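/- arXiv:1001.0890 — 3 statements merged into one kernel-verified Lean document; each statement's English description precedes it below -/
import Mathlib

section
/- Let $S$ be a path-connected open subset of the plane, and let $u, v \in S$ be points with rational coordinates. Then there exists a polygonal line from $u$ to $v$, contained in $S$, all of whose vertices have rational coordinates. -/
/-- A point of the plane has rational coordinates. -/
def IsRatPt (p : EuclideanSpace ℝ (Fin 2)) : Prop :=
  (∃ a : ℚ, p 0 = (a : ℝ)) ∧ (∃ b : ℚ, p 1 = (b : ℝ))

namespace Stmt2Aux

/-- Reachability from `u` by a rational polygonal line inside `S`. -/
def Reach (S : Set (EuclideanSpace ℝ (Fin 2))) (u z : EuclideanSpace ℝ (Fin 2)) : Prop :=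
  ∃ (k : ℕ) (W : Fin (k + 1) → EuclideanSpace ℝ (Fin 2)),
    W 0 = u ∧ W (Fin.last k) = z ∧ (∀ i, IsRatPt (W i)) ∧
    ∀ i : Fin k, segment ℝ (W i.castSucc) (W i.succ) ⊆ S

lemma reach_self (S : Set (EuclideanSpace ℝ (Fin 2))) {u : EuclideanSpace ℝ (Fin 2)}
    (hur : IsRatPt u) : Reach S u u :=
  ⟨0, fun _ => u, rfl, rfl, fun _ => hur, fun i => i.elim0⟩

lemma reach_snoc {S : Set (EuclideanSpace ℝ (Fin 2))} {u w z : EuclideanSpace ℝ (Fin 2)}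
    (h : Reach S u w) (hz : IsRatPt z) (hseg : segment ℝ w z ⊆ S) : Reach S u z := by
  obtain ⟨k, W, h0, hl, hr, hs⟩ := h
  refine ⟨k + 1, Fin.snoc W z, ?_, ?_, ?_, ?_⟩
  · have : (0 : Fin (k + 2)) = Fin.castSucc 0 := rfl
    rw [this, Fin.snoc_castSucc, h0]
  · rw [Fin.snoc_last]
  · intro i
    induction i using Fin.lastCases with
    | last => rw [Fin.snoc_last]; exact hz
    | cast j => rw [Fin.snoc_castSucc]; exact hr j
  · intro i
    induction i using Fin.lastCases with
    | last =>
      rw [Fin.succ_last, Fin.snoc_last, Fin.snoc_castSucc, hl]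
      exact hseg
    | cast j =>
      rw [Fin.succ_castSucc, Fin.snoc_castSucc, Fin.snoc_castSucc]
      exact hs j

lemma exists_ratPt_near (p : EuclideanSpace ℝ (Fin 2)) {ε : ℝ} (hε : 0 < ε) :
    ∃ z : EuclideanSpace ℝ (Fin 2), IsRatPt z ∧ dist z p < ε := by
  obtain ⟨a, ha⟩ := _root_.exists_rat_near (p 0) (by linarith : (0:ℝ) < ε / 2)
  obtain ⟨b, hb⟩ := _root_.exists_rat_near (p 1) (by linarith : (0:ℝ) < ε / 2)
  refine ⟨(WithLp.equiv 2 (Fin 2 → ℝ)).symm ![(a:ℝ), (b:ℝ)], ⟨⟨a, rfl⟩, ⟨b, rfl⟩⟩, ?_⟩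
  rw [EuclideanSpace.dist_eq]
  rw [Real.sqrt_lt' hε]
  rw [Fin.sum_univ_two]
  have h0 : ((WithLp.equiv 2 (Fin 2 → ℝ)).symm ![(a:ℝ), (b:ℝ)]) 0 = (a:ℝ) := rfl
  have h1 : ((WithLp.equiv 2 (Fin 2 → ℝ)).symm ![(a:ℝ), (b:ℝ)]) 1 = (b:ℝ) := rfl
  rw [h0, h1]
  have ha' : |p 0 - (a:ℝ)| < ε / 2 := ha
  have hb' : |p 1 - (b:ℝ)| < ε / 2 := hb
  rw [abs_lt] at ha' hb'
  rw [Real.dist_eq, Real.dist_eq, sq_abs, sq_abs]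
  nlinarith [ha'.1, ha'.2, hb'.1, hb'.2]

end Stmt2Aux

open Stmt2Aux Metric in
theorem stmt2 (S : Set (EuclideanSpace ℝ (Fin 2))) (hopen : IsOpen S)
    (hconn : IsPathConnected S) (u v : EuclideanSpace ℝ (Fin 2))
    (hu : u ∈ S) (hv : v ∈ S) (hur : IsRatPt u) (hvr : IsRatPt v) :
    ∃ (k : ℕ) (W : Fin (k + 1) → EuclideanSpace ℝ (Fin 2)),
      W 0 = u ∧ W (Fin.last k) = v ∧ (∀ i, IsRatPt (W i)) ∧
      ∀ i : Fin k, segment ℝ (W i.castSucc) (W i.succ) ⊆ S := by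
  set T : Set (EuclideanSpace ℝ (Fin 2)) :=
    {p | ∃ r > 0, ball p r ⊆ S ∧ ∃ w, IsRatPt w ∧ Reach S u w ∧ w ∈ ball p r} with hT
  -- T is open
  have hTopen : IsOpen T := by
    rw [Metric.isOpen_iff]
    rintro p ⟨r, hr, hb, w, hwr, hwreach, hwball⟩
    rw [mem_ball] at hwball
    refine ⟨(r - dist w p) / 2, by linarith, ?_⟩
    intro p' hp'
    rw [mem_ball] at hp'
    refine ⟨r - dist p' p, by have := dist_nonneg (x := w) (y := p); linarith, ?_, w, hwr, hwreach, ?_⟩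
    · intro x hx
      rw [mem_ball] at hx
      apply hb
      rw [mem_ball]
      calc dist x p ≤ dist x p' + dist p' p := dist_triangle _ _ _
        _ < (r - dist p' p) + dist p' p := by linarith
        _ = r := by ring
    · rw [mem_ball]
      calc dist w p' ≤ dist w p + dist p p' := dist_triangle _ _ _
        _ < r - dist p' p := by rw [dist_comm p p']; linarith
  -- closure property: S ∩ closure T ⊆ T
  have hTclos : ∀ p ∈ S, p ∈ closure T → p ∈ T := by
    intro p hpS hpc
    obtain ⟨r, hr, hb⟩ := Metric.isOpen_iff.mp hopen p hpS
    rw [Metric.mem_closure_iff] at hpc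
    obtain ⟨q, hqT, hpq⟩ := hpc (r / 2) (by linarith)
    obtain ⟨s, hs, hbq, w, hwr, hwreach, hwball⟩ := hqT
    obtain ⟨z, hzr, hzq⟩ := exists_ratPt_near q (lt_min hs (by linarith : (0:ℝ) < r - dist p q))
    have hzq' : dist z q < s := lt_of_lt_of_le hzq (min_le_left _ _)
    have hzq'' : dist z q < r - dist p q := lt_of_lt_of_le hzq (min_le_right _ _)
    have hzreach : Reach S u z := by
      refine reach_snoc hwreach hzr ?_
      have : segment ℝ w z ⊆ ball q s :=
        (convex_ball q s).segment_subset hwball (mem_ball.mpr hzq')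
      exact this.trans hbq
    refine ⟨r, hr, hb, z, hzr, hzreach, ?_⟩
    rw [mem_ball]
    calc dist z p ≤ dist z q + dist q p := dist_triangle _ _ _
      _ < (r - dist p q) + dist q p := by linarith
      _ = r := by rw [dist_comm q p]; ring
  -- u ∈ T
  have huT : u ∈ T := by
    obtain ⟨r, hr, hb⟩ := Metric.isOpen_iff.mp hopen u hu
    exact ⟨r, hr, hb, u, hur, reach_self S hur, mem_ball_self hr⟩
  -- S ⊆ T by connectedness
  have hST : S ⊆ T := by
    intro p hpS
    by_contra hpT
    have hpc : p ∉ closure T := fun h => hpT (hTclos p hpS h)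
    have hpre : IsPreconnected S := hconn.isConnected.isPreconnected
    have hsub : S ⊆ T ∪ (closure T)ᶜ := by
      intro x hx
      by_cases hxc : x ∈ closure T
      · exact Or.inl (hTclos x hx hxc)
      · exact Or.inr hxc
    have hne := hpre T (closure T)ᶜ hTopen (isClosed_closure.isOpen_compl) hsub
      ⟨u, hu, huT⟩ ⟨p, hpS, hpc⟩
    obtain ⟨x, _, hxT, hxc⟩ := hne
    exact hxc (subset_closure hxT)
  -- conclude
  obtain ⟨r, hr, hb, w, hwr, hwreach, hwball⟩ := hST hv
  refine reach_snoc hwreach hvr ?_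
  have : segment ℝ w v ⊆ ball v r :=
    (convex_ball v r).segment_subset hwball (mem_ball_self hr)
  exact this.trans hb
end

section
/- A path-connected open subset of the plane containing a rational point is rationally path-connected: any two rational points in it can be joined by a path within the set passing only through finitely many segment-directions with rational endpoints at vertices; in particular, the set of rational points of $S$, with edges between rational points $p, q$ whenever the segment $[p,q] \subseteq S$, forms a connected graph. -/
/-- Rational points are dense in the plane. -/
lemma ratPt_dense (y : EuclideanSpace ℝ (Fin 2)) {ε : ℝ} (hε : 0 < ε) :
    ∃ w : EuclideanSpace ℝ (Fin 2), IsRatPt w ∧ dist w y < ε := by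
  obtain ⟨a, ha1, ha2⟩ := exists_rat_btwn (show y 0 - ε/2 < y 0 + ε/2 by linarith)
  obtain ⟨b, hb1, hb2⟩ := exists_rat_btwn (show y 1 - ε/2 < y 1 + ε/2 by linarith)
  refine ⟨(WithLp.equiv 2 (Fin 2 → ℝ)).symm ![(a:ℝ), (b:ℝ)], ⟨⟨a, rfl⟩, ⟨b, rfl⟩⟩, ?_⟩
  have hdist : dist ((WithLp.equiv 2 (Fin 2 → ℝ)).symm ![(a:ℝ), (b:ℝ)]) y
      = Real.sqrt (dist ((a:ℝ)) (y 0) ^ 2 + dist ((b:ℝ)) (y 1) ^ 2) := by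
    rw [EuclideanSpace.dist_eq, Fin.sum_univ_two]; rfl
  rw [hdist]
  have h0 : dist ((a:ℝ)) (y 0) < ε/2 := by
    rw [Real.dist_eq, abs_lt]; constructor <;> linarith
  have h1 : dist ((b:ℝ)) (y 1) < ε/2 := by
    rw [Real.dist_eq, abs_lt]; constructor <;> linarith
  have hnn0 := dist_nonneg (x := (a:ℝ)) (y := y 0)
  have hnn1 := dist_nonneg (x := (b:ℝ)) (y := y 1)
  rw [show ε = Real.sqrt (ε^2) from (Real.sqrt_sq hε.le).symm]
  apply Real.sqrt_lt_sqrt (by positivity)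
  nlinarith

theorem stmt3 (S : Set (EuclideanSpace ℝ (Fin 2))) (hopen : IsOpen S)
    (hconn : IsPathConnected S) (hne : ∃ p : EuclideanSpace ℝ (Fin 2), p ∈ S ∧ IsRatPt p) :
    (SimpleGraph.fromRel
      (fun p q : {p : EuclideanSpace ℝ (Fin 2) // p ∈ S ∧ IsRatPt p} =>
        segment ℝ p.1 q.1 ⊆ S)).Connected := by
  set G := (SimpleGraph.fromRel
      (fun p q : {p : EuclideanSpace ℝ (Fin 2) // p ∈ S ∧ IsRatPt p} =>
        segment ℝ p.1 q.1 ⊆ S)) with hG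
  -- adjacency or equality from being in a common ball inside S
  have hadj : ∀ (u w : {p : EuclideanSpace ℝ (Fin 2) // p ∈ S ∧ IsRatPt p})
      (y : EuclideanSpace ℝ (Fin 2)) (ε : ℝ), Metric.ball y ε ⊆ S →
      u.1 ∈ Metric.ball y ε → w.1 ∈ Metric.ball y ε → G.Reachable u w := by
    intro u w y ε hball hu hw
    by_cases huw : u = w
    · exact huw ▸ SimpleGraph.Reachable.refl u
    · refine SimpleGraph.Adj.reachable ?_
      rw [hG, SimpleGraph.fromRel_adj]
      exact ⟨huw, Or.inl (((convex_ball y ε).segment_subset hu hw).trans hball)⟩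
  rw [SimpleGraph.connected_iff]
  constructor
  · -- preconnected
    intro v w
    -- set of points of S having a ball inside S containing a vertex reachable from v
    set U : Set (EuclideanSpace ℝ (Fin 2)) :=
      {x | ∃ u, G.Reachable v u ∧ ∃ ε > 0, Metric.ball x ε ⊆ S ∧ u.1 ∈ Metric.ball x ε} with hU
    have hUopen : IsOpen U := by
      rw [Metric.isOpen_iff]
      rintro x ⟨u, hru, ε, hε, hball, hu⟩
      have hd0 : (0:ℝ) ≤ dist u.1 x := dist_nonneg
      refine ⟨(ε - dist u.1 x) / 2, by simp [Metric.mem_ball] at hu; linarith, ?_⟩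
      intro z hz
      have hd1 : (0:ℝ) ≤ dist z x := dist_nonneg
      rw [Metric.mem_ball] at hz hu
      refine ⟨u, hru, ε - dist z x, by linarith, ?_, ?_⟩
      · intro t ht
        rw [Metric.mem_ball] at ht
        exact hball (Metric.mem_ball.2 (lt_of_le_of_lt (dist_triangle t z x) (by linarith)))
      · rw [Metric.mem_ball]
        calc dist u.1 z ≤ dist u.1 x + dist x z := dist_triangle _ _ _
          _ < ε - dist z x := by rw [dist_comm x z]; linarith
    -- points of S not in U have a ball disjoint from U
    have hcomp : ∀ x ∈ S, x ∉ U → ∃ δ > 0, Metric.ball x δ ∩ U = ∅ := by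
      intro x hx hxU
      obtain ⟨ε, hε, hball⟩ := Metric.isOpen_iff.1 hopen x hx
      refine ⟨ε/4, by linarith, ?_⟩
      by_contra hne'
      obtain ⟨y, hyb, u, hru, ε', hε', hball', hu⟩ := Set.nonempty_iff_ne_empty.2 hne'
      obtain ⟨r, hr, hrdist⟩ := ratPt_dense y (lt_min hε' (by linarith : (0:ℝ) < ε/2))
      have hrball : r ∈ Metric.ball y ε' :=
        Metric.mem_ball.2 (hrdist.trans_le (min_le_left _ _))
      have hrS : r ∈ S := hball' hrball
      set rv : {p : EuclideanSpace ℝ (Fin 2) // p ∈ S ∧ IsRatPt p} := ⟨r, hrS, hr⟩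
      have hreach : G.Reachable v rv := hru.trans (hadj u rv y ε' hball' hu hrball)
      apply hxU
      refine ⟨rv, hreach, ε, hε, hball, ?_⟩
      rw [Metric.mem_ball] at hyb ⊢
      calc dist rv.1 x ≤ dist r y + dist y x := dist_triangle _ _ _
        _ < ε/2 + ε/4 := by
            have := hrdist.trans_le (min_le_right _ _); exact add_lt_add this hyb
        _ < ε := by linarith
    -- S ⊆ U via connectedness
    have hSU : S ⊆ U := by
      intro x hx
      by_contra hxU
      set V' : Set (EuclideanSpace ℝ (Fin 2)) :=
        {z | ∃ δ > 0, Metric.ball z δ ∩ U = ∅} with hV'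
      have hV'open : IsOpen V' := by
        rw [Metric.isOpen_iff]
        rintro z ⟨δ, hδ, hdisj⟩
        refine ⟨δ/2, by linarith, fun t ht => ⟨δ/2, by linarith, ?_⟩⟩
        rw [Metric.mem_ball] at ht
        rw [Set.eq_empty_iff_forall_notMem]
        intro s ⟨hs1, hs2⟩
        rw [Metric.mem_ball] at hs1
        have : s ∈ Metric.ball z δ ∩ U :=
          ⟨Metric.mem_ball.2 ((dist_triangle s t z).trans_lt (by linarith)), hs2⟩
        rw [hdisj] at this; exact this
      have hcover : S ⊆ U ∪ V' := by
        intro z hz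
        by_cases hzU : z ∈ U
        · exact Or.inl hzU
        · exact Or.inr (hcomp z hz hzU)
      have hSUne : (S ∩ U).Nonempty := by
        obtain ⟨ε, hε, hball⟩ := Metric.isOpen_iff.1 hopen v.1 v.2.1
        exact ⟨v.1, v.2.1, v, SimpleGraph.Reachable.refl v, ε, hε, hball,
          Metric.mem_ball_self hε⟩
      have hSV'ne : (S ∩ V').Nonempty := ⟨x, hx, hcomp x hx hxU⟩
      obtain ⟨z, hzS, hzU, hzV'⟩ :=
        hconn.isConnected.isPreconnected U V' hUopen hV'open hcover hSUne hSV'ne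
      obtain ⟨δ, hδ, hdisj⟩ := hzV'
      have : z ∈ Metric.ball z δ ∩ U := ⟨Metric.mem_ball_self hδ, hzU⟩
      rw [hdisj] at this; exact this
    obtain ⟨u, hru, ε, hε, hball, hu⟩ := hSU w.2.1
    exact hru.trans (hadj u w w.1 ε hball hu (Metric.mem_ball_self hε))
  · -- nonempty
    obtain ⟨p, hp⟩ := hne
    exact ⟨⟨p, hp⟩⟩
end

section
/- Fix two sequences of vectors $(e_i)_{i \ge 1}$ and $(f_j)_{j \ge 1}$ in $\mathbb{R}^2$ defining polygonal routes: route $R$ starts at a fixed point $v$ with consecutive segments $e_1, e_2, \dots$, and route $R_2(w)$ starts at $w$ with consecutive segments $f_1, f_2, \dots$. Then there exists a point $w^*$ such that the routes $R$ and $R_2(w^*)$ are almost disjoint: every vertex of $R$ lies outside every segment of $R_2(w^*)$ and every vertex of $R_2(w^*)$ lies outside every segment of $R$. -/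
open MeasureTheory

noncomputable abbrev E2 := EuclideanSpace ℝ (Fin 2)

lemma seg_null (a b : E2) : volume (segment ℝ a b) = 0 := by
  have h1 : segment ℝ a b ⊆ (affineSpan ℝ {a, b} : Set E2) := by
    rw [← convexHull_pair]
    exact convexHull_subset_affineSpan _
  have h2 : affineSpan ℝ ({a, b} : Set E2) ≠ ⊤ := by
    intro h
    have hd : Submodule.span ℝ ({a -ᵥ b} : Set E2) = ⊤ := by
      have := AffineSubspace.vectorSpan_eq_top_of_affineSpan_eq_top ℝ _ _ h
      rwa [vectorSpan_pair] at this
    have h3 : Module.finrank ℝ E2 ≤ 1 := by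
      rw [← finrank_top ℝ E2, ← hd]
      exact (finrank_span_le_card _).trans (by simp)
    have h4 : Module.finrank ℝ E2 = 2 := by simp
    omega
  exact measure_mono_null h1 (Measure.addHaar_affineSubspace _ _ h2)

lemma mem_seg_add_iff (V w a b : E2) :
    V ∈ segment ℝ (w + a) (w + b) ↔ w ∈ segment ℝ (V - a) (V - b) := by
  constructor <;> rintro ⟨s, t, hs, ht, hst, h⟩ <;> refine ⟨s, t, hs, ht, hst, ?_⟩ <;>
    · rw [← h]
      have : t = 1 - s := by linarith
      subst this
      module

lemma mem_seg_sub_iff (w c P Q : E2) :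
    w + c ∈ segment ℝ P Q ↔ w ∈ segment ℝ (P - c) (Q - c) := by
  constructor <;> rintro ⟨s, t, hs, ht, hst, h⟩ <;> refine ⟨s, t, hs, ht, hst, ?_⟩
  · have hw : w = s • P + t • Q - c := by rw [h]; abel
    rw [hw]
    have : t = 1 - s := by linarith
    subst this
    module
  · rw [← h]
    have : t = 1 - s := by linarith
    subst this
    module

/-- The `m`-th vertex of the polygonal route starting at `p` with segment vectors `g`. -/
noncomputable def routeVertex (p : EuclideanSpace ℝ (Fin 2)) (g : ℕ → EuclideanSpace ℝ (Fin 2))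
    (m : ℕ) : EuclideanSpace ℝ (Fin 2) :=
  p + ∑ k ∈ Finset.range m, g k

theorem stmt8 (v : EuclideanSpace ℝ (Fin 2)) (e f : ℕ → EuclideanSpace ℝ (Fin 2)) :
    ∃ w : EuclideanSpace ℝ (Fin 2), ∀ i j : ℕ,
      routeVertex v e i ∉ segment ℝ (routeVertex w f j) (routeVertex w f (j + 1)) ∧
      routeVertex w f j ∉ segment ℝ (routeVertex v e i) (routeVertex v e (i + 1)) := by
  set P : ℕ → E2 := fun i => v + ∑ k ∈ Finset.range i, e k with hP
  set c : ℕ → E2 := fun j => ∑ k ∈ Finset.range j, f k with hc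
  set B : Set E2 := ⋃ i, ⋃ j, (segment ℝ (P i - c j) (P i - c (j + 1)) ∪
      segment ℝ (P i - c j) (P (i + 1) - c j)) with hB
  have hBnull : volume B = 0 := by
    refine measure_iUnion_null fun i => measure_iUnion_null fun j => ?_
    exact measure_union_null (seg_null _ _) (seg_null _ _)
  have hne : ∃ w : E2, w ∉ B := by
    by_contra hcon
    push_neg at hcon
    have huniv : B = Set.univ := Set.eq_univ_of_forall hcon
    have hpos : 0 < volume (Metric.ball (0 : E2) 1) :=
      Metric.measure_ball_pos volume (0 : E2) one_pos
    have hle : volume (Metric.ball (0 : E2) 1) ≤ volume B :=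
      measure_mono (by rw [huniv]; exact Set.subset_univ _)
    rw [hBnull] at hle
    exact hpos.ne' (le_antisymm hle (zero_le'))
  obtain ⟨w, hw⟩ := hne
  refine ⟨w, fun i j => ?_⟩
  have hw1 : w ∉ segment ℝ (P i - c j) (P i - c (j + 1)) ∧
      w ∉ segment ℝ (P i - c j) (P (i + 1) - c j) := by
    constructor <;> intro h <;> exact hw (Set.mem_iUnion.2 ⟨i, Set.mem_iUnion.2 ⟨j,
      by first | exact Set.mem_union_left _ h | exact Set.mem_union_right _ h⟩⟩)
  have hv1 : routeVertex v e i = P i := rfl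
  have hv2 : routeVertex v e (i + 1) = P (i + 1) := rfl
  have hw2 : ∀ m, routeVertex w f m = w + c m := fun m => rfl
  constructor
  · rw [hv1, hw2, hw2, mem_seg_add_iff]
    exact hw1.1
  · rw [hv1, hv2, hw2, mem_seg_sub_iff]
    exact hw1.2
end
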